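/- If F is ν-Hölder continuous with constant L (ν ∈ (0,1]) and x* satisfies generalized monotonicity, then the extragradient iterates satisfy V(x_k, y_k) − 2^{ν−1} L² γ_k² α^{−(1+ν)} [V(x_k, y_k)]^ν ≤ V(x_k, x*) − V(x_{k+1}, x*). -/

import Mathlib

open scoped InnerProductSpace

/-- Type synonym to carry an alternative norm. -/
def NrmSyn (n : ℕ) (_nrm : EuclideanSpace ℝ (Fin n) → ℝ) := EuclideanSpace ℝ (Fin n)

lemma nrm_nonneg {n : ℕ} (nrm : EuclideanSpace ℝ (Fin n) → ℝ)
    (hn0 : ∀ v, nrm v = 0 ↔ v = 0)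
    (hns : ∀ (c : ℝ) v, nrm (c • v) = |c| * nrm v)
    (hnt : ∀ v w, nrm (v + w) ≤ nrm v + nrm w) (v : EuclideanSpace ℝ (Fin n)) :
    0 ≤ nrm v := by
  have h1 : nrm ((-1 : ℝ) • v) = nrm v := by rw [hns]; simp
  have h2 : nrm 0 = 0 := (hn0 0).mpr rfl
  have h3 := hnt v ((-1 : ℝ) • v)
  simp only [h1] at h3
  have : v + (-1 : ℝ) • v = 0 := by module
  rw [this, h2] at h3
  linarith

lemma norm_le_nrm {n : ℕ} (nrm : EuclideanSpace ℝ (Fin n) → ℝ)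
    (hn0 : ∀ v, nrm v = 0 ↔ v = 0)
    (hns : ∀ (c : ℝ) v, nrm (c • v) = |c| * nrm v)
    (hnt : ∀ v w, nrm (v + w) ≤ nrm v + nrm w) :
    ∃ C : ℝ, 0 ≤ C ∧ ∀ v, ‖v‖ ≤ C * nrm v := by
  letI : AddCommGroup (NrmSyn n nrm) :=
    inferInstanceAs (AddCommGroup (EuclideanSpace ℝ (Fin n)))
  letI : Module ℝ (NrmSyn n nrm) :=
    inferInstanceAs (Module ℝ (EuclideanSpace ℝ (Fin n)))
  letI : NormedAddCommGroup (NrmSyn n nrm) :=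
    AddGroupNorm.toNormedAddCommGroup
      { toFun := nrm
        map_zero' := (hn0 0).mpr rfl
        add_le' := hnt
        neg' := fun v => by
          have : (-v : EuclideanSpace ℝ (Fin n)) = (-1 : ℝ) • v := by module
          rw [this]; exact (hns (-1) v).trans (by simp)
        eq_zero_of_map_eq_zero' := fun v hv => (hn0 v).mp hv }
  letI : NormedSpace ℝ (NrmSyn n nrm) :=
    { norm_smul_le := fun c v => by
        have : ‖c • v‖ = |c| * nrm v := hns c v
        rw [Real.norm_eq_abs]; exact (hns c v).le }
  haveI : FiniteDimensional ℝ (NrmSyn n nrm) :=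
    inferInstanceAs (FiniteDimensional ℝ (EuclideanSpace ℝ (Fin n)))
  let f : (NrmSyn n nrm) →ₗ[ℝ] EuclideanSpace ℝ (Fin n) :=
    LinearMap.id (R := ℝ) (M := EuclideanSpace ℝ (Fin n))
  let g := LinearMap.toContinuousLinearMap f
  refine ⟨‖g‖, norm_nonneg _, fun v => ?_⟩
  have := g.le_opNorm v
  exact this

lemma pairing_aux {n : ℕ} (nrm dnrm : EuclideanSpace ℝ (Fin n) → ℝ)
    (hn0 : ∀ v, nrm v = 0 ↔ v = 0)
    (hns : ∀ (c : ℝ) v, nrm (c • v) = |c| * nrm v)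
    (hnt : ∀ v w, nrm (v + w) ≤ nrm v + nrm w)
    (hdual : ∀ φ, dnrm φ = sSup ((fun v => ⟪φ, v⟫_ℝ) '' {v | nrm v ≤ 1}))
    (φ v : EuclideanSpace ℝ (Fin n)) :
    ⟪φ, v⟫_ℝ ≤ dnrm φ * nrm v := by
  obtain ⟨C, hC0, hC⟩ := norm_le_nrm nrm hn0 hns hnt
  have hnn := nrm_nonneg nrm hn0 hns hnt
  rcases eq_or_lt_of_le (hnn v) with h0 | h0
  · have hv : v = 0 := (hn0 v).mp h0.symm
    rw [hv]
    have : nrm (0 : EuclideanSpace ℝ (Fin n)) = 0 := (hn0 0).mpr rfl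
    simp [this]
  · set t := nrm v with ht
    have hbdd : BddAbove ((fun v => ⟪φ, v⟫_ℝ) '' {v | nrm v ≤ 1}) := by
      refine ⟨‖φ‖ * C, ?_⟩
      rintro _ ⟨w, hw, rfl⟩
      calc ⟪φ, w⟫_ℝ ≤ ‖φ‖ * ‖w‖ := real_inner_le_norm φ w
        _ ≤ ‖φ‖ * (C * nrm w) := mul_le_mul_of_nonneg_left (hC w) (norm_nonneg _)
        _ ≤ ‖φ‖ * (C * 1) := by
            have := hw; gcongr; exact this
        _ = ‖φ‖ * C := by ring
    have hmem : (fun w => ⟪φ, w⟫_ℝ) (t⁻¹ • v) ∈ (fun v => ⟪φ, v⟫_ℝ) '' {v | nrm v ≤ 1} := by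
      refine ⟨t⁻¹ • v, ?_, rfl⟩
      have : nrm (t⁻¹ • v) = |t⁻¹| * nrm v := hns _ _
      simp only [Set.mem_setOf_eq, this, abs_of_pos (inv_pos.mpr h0)]
      rw [inv_mul_cancel₀ (ne_of_gt h0)]
    have hle : ⟪φ, t⁻¹ • v⟫_ℝ ≤ dnrm φ := by
      rw [hdual]; exact le_csSup hbdd hmem
    have heq : ⟪φ, t⁻¹ • v⟫_ℝ = t⁻¹ * ⟪φ, v⟫_ℝ := real_inner_smul_right φ v t⁻¹
    rw [heq] at hle
    have hmul := mul_le_mul_of_nonneg_left hle (le_of_lt h0)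
    rw [mul_comm (dnrm φ) (nrm v)]
    calc ⟪φ, v⟫_ℝ = t * (t⁻¹ * ⟪φ, v⟫_ℝ) := by field_simp
      _ ≤ t * dnrm φ := hmul

/-- First-order optimality for a minimizer of `z ↦ ⟪ξ,z⟫ + ω z` on a convex set. -/
lemma first_order {n : ℕ} {X : Set (EuclideanSpace ℝ (Fin n))} (hXcv : Convex ℝ X)
    (ω : EuclideanSpace ℝ (Fin n) → ℝ) (g ξ u : EuclideanSpace ℝ (Fin n))
    (hu : u ∈ X) (hg : HasGradientAt ω g u)
    (hmin : ∀ z ∈ X, ⟪ξ, u⟫_ℝ + ω u ≤ ⟪ξ, z⟫_ℝ + ω z) :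
    ∀ z ∈ X, 0 ≤ ⟪ξ + g, z - u⟫_ℝ := by
  intro z hz
  set c : ℝ → EuclideanSpace ℝ (Fin n) := fun t => u + t • (z - u) with hc
  have hmemc : ∀ t ∈ Set.Icc (0:ℝ) 1, c t ∈ X := by
    intro t ht
    have : c t = (1 - t) • u + t • z := by simp only [hc]; module
    rw [this]
    exact hXcv hu hz (by linarith [ht.2]) ht.1 (by ring)
  have hcd : HasDerivAt c (z - u) 0 := by
    exact (((hasDerivAt_id (0:ℝ)).smul_const (z - u)).const_add u).congr_deriv (one_smul ℝ _)
  have hc0 : c 0 = u := by simp [hc]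
  have hωd : HasDerivAt (fun t => ω (c t)) ⟪g, z - u⟫_ℝ 0 := by
    have h1 : HasFDerivAt ω ((InnerProductSpace.toDual ℝ (EuclideanSpace ℝ (Fin n))) g) (c 0) := by
      rw [hc0]; exact hg.hasFDerivAt
    have := h1.comp_hasDerivAt 0 hcd
    simp only [InnerProductSpace.toDual_apply_apply] at this
    exact this
  have hξd : HasDerivAt (fun t => ⟪ξ, c t⟫_ℝ) ⟪ξ, z - u⟫_ℝ 0 := by
    have h1 : (fun t => ⟪ξ, c t⟫_ℝ) = fun t : ℝ => ⟪ξ, u⟫_ℝ + t * ⟪ξ, z - u⟫_ℝ := by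
      funext t
      simp only [hc, inner_add_right, real_inner_smul_right]
    rw [h1]
    have h2 := ((hasDerivAt_id (0:ℝ)).const_mul ⟪ξ, z - u⟫_ℝ).const_add ⟪ξ, u⟫_ℝ
    exact (h2.congr_deriv (mul_one _)).congr_of_eventuallyEq
      (Filter.Eventually.of_forall fun t => by simp only [id_eq]; ring)
  set ψ : ℝ → ℝ := fun t => ⟪ξ, c t⟫_ℝ + ω (c t) with hψ
  have hψd : HasDerivAt ψ (⟪ξ, z - u⟫_ℝ + ⟪g, z - u⟫_ℝ) 0 := hξd.add hωd
  have hslope : Filter.Tendsto (slope ψ 0) (nhdsWithin 0 (Set.Ioi 0))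
      (nhds (⟪ξ, z - u⟫_ℝ + ⟪g, z - u⟫_ℝ)) := by
    have := hasDerivAt_iff_tendsto_slope.mp hψd
    exact this.mono_left (nhdsWithin_mono 0 (fun t ht => ne_of_gt ht))
  have hev : ∀ᶠ t in nhdsWithin (0:ℝ) (Set.Ioi 0), 0 ≤ slope ψ 0 t := by
    filter_upwards [Ioc_mem_nhdsGT_of_mem (Set.mem_Ico.mpr ⟨le_refl (0:ℝ), one_pos⟩)] with t ht
    have htX : c t ∈ X := hmemc t ⟨le_of_lt ht.1, ht.2⟩
    have hge : ψ 0 ≤ ψ t := by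
      have := hmin (c t) htX
      simpa [hψ, hc0] using this
    rw [slope_def_field]
    have hpos : (0:ℝ) < t := ht.1
    rw [div_nonneg_iff]
    left
    constructor <;> [linarith; simpa using hpos.le]
  have hder : 0 ≤ ⟪ξ, z - u⟫_ℝ + ⟪g, z - u⟫_ℝ := ge_of_tendsto hslope hev
  rw [inner_add_left]
  linarith

/-- The Bregman distance `V(x,z) = ω(z) − ω(x) − ⟨∇ω(x), z−x⟩`. -/
noncomputable def bregman {n : ℕ} (ω : EuclideanSpace ℝ (Fin n) → ℝ)
    (gω : EuclideanSpace ℝ (Fin n) → EuclideanSpace ℝ (Fin n))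
    (x z : EuclideanSpace ℝ (Fin n)) : ℝ :=
  ω z - ω x - ⟪gω x, z - x⟫_ℝ

/-- For the extragradient step with a `ν`-Hölder continuous operator `F` (constant `L`)
and a generalized-monotone solution `x*`:
`V(x_k,y_k) − 2^{ν−1} L² γ_k² α^{−(1+ν)} [V(x_k,y_k)]^ν ≤ V(x_k,x*) − V(x_{k+1},x*)`. -/
theorem stmt14 {n : ℕ} (X Xo : Set (EuclideanSpace ℝ (Fin n)))
    (hXne : X.Nonempty) (hXcl : IsClosed X) (hXcv : Convex ℝ X) (hXoX : Xo ⊆ X)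
    (nrm dnrm : EuclideanSpace ℝ (Fin n) → ℝ)
    (hn0 : ∀ v, nrm v = 0 ↔ v = 0)
    (hns : ∀ (c : ℝ) v, nrm (c • v) = |c| * nrm v)
    (hnt : ∀ v w, nrm (v + w) ≤ nrm v + nrm w)
    (hdual : ∀ φ, dnrm φ = sSup ((fun v => ⟪φ, v⟫_ℝ) '' {v | nrm v ≤ 1}))
    (F : EuclideanSpace ℝ (Fin n) → EuclideanSpace ℝ (Fin n))
    (L : ℝ) (hL : 0 < L) (ν : ℝ) (hν0 : 0 < ν) (hν1 : ν ≤ 1)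
    (hF : ∀ x ∈ X, ∀ y ∈ X, dnrm (F x - F y) ≤ L * (nrm (x - y)) ^ ν)
    (α : ℝ) (hα : 0 < α)
    (ω : EuclideanSpace ℝ (Fin n) → ℝ)
    (gω : EuclideanSpace ℝ (Fin n) → EuclideanSpace ℝ (Fin n))
    (hωcv : ConvexOn ℝ X ω)
    (hgrad : ∀ y ∈ Xo, HasGradientAt ω (gω y) y)
    (hsc : ∀ y ∈ Xo, ∀ z ∈ X, α / 2 * (nrm (y - z)) ^ 2 ≤ bregman ω gω y z)
    (xs : EuclideanSpace ℝ (Fin n)) (hxs : xs ∈ X)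
    (hGM : ∀ x ∈ X, 0 ≤ ⟪F x, x - xs⟫_ℝ)
    (γk : ℝ) (hγk : 0 < γk)
    (xk yk xk1 : EuclideanSpace ℝ (Fin n))
    (hxk : xk ∈ X) (hxko : xk ∈ Xo)
    (hykX : yk ∈ X) (hyko : yk ∈ Xo)
    (hyk : IsMinOn (fun z => ⟪γk • F xk, z⟫_ℝ + bregman ω gω xk z) X yk)
    (hxk1X : xk1 ∈ X) (hxk1o : xk1 ∈ Xo)
    (hxk1 : IsMinOn (fun z => ⟪γk • F yk, z⟫_ℝ + bregman ω gω xk z) X xk1) :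
    bregman ω gω xk yk -
        (2 : ℝ) ^ (ν - 1) * L ^ 2 * γk ^ 2 * α ^ (-(1 + ν)) *
          (bregman ω gω xk yk) ^ ν ≤
      bregman ω gω xk xs - bregman ω gω xk1 xs := by
  -- notation
  set A := bregman ω gω xk yk with hA
  set B := bregman ω gω xk xs with hB
  set Cc := bregman ω gω xk1 xs with hC
  set D := bregman ω gω yk xk1 with hD
  set a := nrm (xk - yk) with ha
  set b := nrm (yk - xk1) with hb
  have hannn : 0 ≤ a := nrm_nonneg nrm hn0 hns hnt _
  have hbnnn : 0 ≤ b := nrm_nonneg nrm hn0 hns hnt _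
  -- first-order optimality for yk
  have hmin1 : ∀ z ∈ X, ⟪γk • F xk - gω xk, yk⟫_ℝ + ω yk ≤ ⟪γk • F xk - gω xk, z⟫_ℝ + ω z := by
    intro z hz
    have h := isMinOn_iff.mp hyk z hz
    simp only [bregman, inner_sub_left, inner_sub_right, real_inner_smul_left] at h ⊢
    linarith
  have hopt1 := first_order hXcv ω (gω yk) (γk • F xk - gω xk) yk hykX (hgrad yk hyko) hmin1
  -- first-order optimality for xk1
  have hmin2 : ∀ z ∈ X, ⟪γk • F yk - gω xk, xk1⟫_ℝ + ω xk1 ≤ ⟪γk • F yk - gω xk, z⟫_ℝ + ω z := by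
    intro z hz
    have h := isMinOn_iff.mp hxk1 z hz
    simp only [bregman, inner_sub_left, inner_sub_right, real_inner_smul_left] at h ⊢
    linarith
  have hopt2 := first_order hXcv ω (gω xk1) (γk • F yk - gω xk) xk1 hxk1X (hgrad xk1 hxk1o) hmin2
  -- scalar forms
  have s1 := hopt1 xk1 hxk1X
  have s2 := hopt2 xs hxs
  have hGM' : 0 ≤ γk * ⟪F yk, yk - xs⟫_ℝ := mul_nonneg hγk.le (hGM yk hykX)
  -- Hölder + duality bound
  have hnrm_flip : nrm (xk1 - yk) = b := by
    have : xk1 - yk = (-1 : ℝ) • (yk - xk1) := by module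
    rw [this, hns]; simp [hb]
  have hpair : γk * ⟪F xk - F yk, xk1 - yk⟫_ℝ ≤ γk * (L * a ^ ν * b) := by
    apply mul_le_mul_of_nonneg_left _ hγk.le
    calc ⟪F xk - F yk, xk1 - yk⟫_ℝ
        ≤ dnrm (F xk - F yk) * nrm (xk1 - yk) :=
          pairing_aux nrm dnrm hn0 hns hnt hdual _ _
      _ ≤ (L * a ^ ν) * nrm (xk1 - yk) := by
          apply mul_le_mul_of_nonneg_right (hF xk hxk yk hykX)
          rw [hnrm_flip]; exact hbnnn
      _ = L * a ^ ν * b := by rw [hnrm_flip]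
  -- combine into key inequality
  have key1 : A + D ≤ B - Cc + γk * (L * a ^ ν * b) := by
    simp only [inner_add_left, inner_sub_left, inner_sub_right, real_inner_smul_left] at s1 s2
    simp only [inner_sub_right] at hGM'
    simp only [inner_sub_left, inner_sub_right] at hpair
    simp only [hA, hB, hC, hD, bregman, inner_sub_right]
    ring_nf at s1 s2 hGM' hpair ⊢
    linarith
  -- strong convexity bounds
  have hDa : α / 2 * b ^ 2 ≤ D := hsc yk hyko xk1 hxk1X
  have hAa : α / 2 * a ^ 2 ≤ A := hsc xk hxko yk hykX
  have hA0 : 0 ≤ A := le_trans (by positivity) hAa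
  -- Young's inequality
  set P := γk * L * a ^ ν with hP
  have hP0 : 0 ≤ P := by
    have : (0:ℝ) ≤ a ^ ν := Real.rpow_nonneg hannn ν
    positivity
  have key2 : A ≤ B - Cc + P ^ 2 / (2 * α) := by
    have hyoung : P * b - α / 2 * b ^ 2 ≤ P ^ 2 / (2 * α) := by
      rw [le_div_iff₀ (by linarith : (0:ℝ) < 2 * α)]
      nlinarith [sq_nonneg (P - α * b)]
    have : γk * (L * a ^ ν * b) = P * b := by rw [hP]; ring
    rw [this] at key1
    linarith
  -- rewrite a^ν squared
  have hsqν : (a ^ ν) ^ 2 = (a ^ 2 : ℝ) ^ ν := by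
    rw [← Real.rpow_natCast (a ^ ν) 2, ← Real.rpow_mul hannn, mul_comm,
      Real.rpow_mul hannn, Real.rpow_natCast]
  have ha2 : a ^ 2 ≤ 2 / α * A := by
    have h1 := mul_le_mul_of_nonneg_left hAa (le_of_lt (by positivity : (0:ℝ) < 2 / α))
    have h2 : 2 / α * (α / 2 * a ^ 2) = a ^ 2 := by field_simp
    linarith [h1, h2.ge, h2.le]
  have hrp : (a ^ 2 : ℝ) ^ ν ≤ (2 / α) ^ ν * A ^ ν := by
    calc (a ^ 2 : ℝ) ^ ν ≤ (2 / α * A) ^ ν :=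
          Real.rpow_le_rpow (sq_nonneg a) ha2 hν0.le
      _ = (2 / α) ^ ν * A ^ ν := Real.mul_rpow (by positivity) hA0
  -- coefficient identity
  have hαν : (0:ℝ) < α ^ ν := Real.rpow_pos_of_pos hα ν
  have hcoef : γk ^ 2 * L ^ 2 * ((2 / α) ^ ν * A ^ ν) / (2 * α) =
      (2 : ℝ) ^ (ν - 1) * L ^ 2 * γk ^ 2 * α ^ (-(1 + ν)) * A ^ ν := by
    rw [Real.rpow_sub (by norm_num : (0:ℝ) < 2), Real.rpow_one,
      Real.rpow_neg hα.le, Real.rpow_add hα, Real.rpow_one,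
      Real.div_rpow (by norm_num : (0:ℝ) ≤ 2) hα.le]
    field_simp
  -- finish
  have hfin : P ^ 2 / (2 * α) ≤ (2 : ℝ) ^ (ν - 1) * L ^ 2 * γk ^ 2 * α ^ (-(1 + ν)) * A ^ ν := by
    have hPsq : P ^ 2 = γk ^ 2 * L ^ 2 * (a ^ ν) ^ 2 := by rw [hP]; ring
    rw [hPsq, hsqν, ← hcoef]
    gcongr
  linarith
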